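/- If the joint distribution of X^n factorizes over a partition π = (α_1|…|α_m) of {1,…,n}, i.e. the random vectors X^{α_1},…,X^{α_m} are mutually independent, then Ω(X^n) = Σ_{k=1}^m Ω(X^{α_k}). -/

import Mathlib

open Finset

noncomputable section

variable {Ω : Type*} [Fintype Ω]

/-- Probability of the event `A ⊆ Ω` under the probability mass function `p`. -/
def probOf (p : Ω → ℝ) (A : Finset Ω) : ℝ := ∑ ω ∈ A, p ω

/-- Shannon entropy (in bits, i.e. logarithm base 2) of the discrete random
variable `X` defined on the finite probability space with mass function `p`. -/
def shEnt {S : Type*} [Fintype S] [DecidableEq S] (p : Ω → ℝ) (X : Ω → S) : ℝ :=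
  -∑ s : S, probOf p (univ.filter fun ω => X ω = s) *
      Real.logb 2 (probOf p (univ.filter fun ω => X ω = s))

/-- Mutual information `I(X;Y)`. -/
def mutInfo {S T : Type*} [Fintype S] [DecidableEq S] [Fintype T] [DecidableEq T]
    (p : Ω → ℝ) (X : Ω → S) (Y : Ω → T) : ℝ :=
  shEnt p X + shEnt p Y - shEnt p (fun ω => (X ω, Y ω))

/-- Conditional mutual information `I(X;Y∣Z)`. -/
def condMutInfo {S T U : Type*} [Fintype S] [DecidableEq S] [Fintype T] [DecidableEq T]
    [Fintype U] [DecidableEq U] (p : Ω → ℝ) (X : Ω → S) (Y : Ω → T) (Z : Ω → U) : ℝ :=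
  shEnt p (fun ω => (X ω, Z ω)) + shEnt p (fun ω => (Y ω, Z ω))
    - shEnt p (fun ω => (X ω, Y ω, Z ω)) - shEnt p Z

variable {n : ℕ} {S : Fin n → Type*} [∀ i, Fintype (S i)] [∀ i, DecidableEq (S i)]

/-- The sub-vector `X^γ` of the tuple of random variables `X`. -/
def restrict (X : ∀ i, Ω → S i) (γ : Finset (Fin n)) : Ω → ∀ i : γ, S i.1 :=
  fun ω i => X i.1 ω

/-- Joint Shannon entropy `H(X^γ)` of the sub-vector indexed by `γ`. -/
def subEnt (p : Ω → ℝ) (X : ∀ i, Ω → S i) (γ : Finset (Fin n)) : ℝ :=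
  shEnt p (restrict X γ)

/-- Total correlation `C(X^γ)`: sum of marginal entropies minus joint entropy. -/
def totCorr (p : Ω → ℝ) (X : ∀ i, Ω → S i) (γ : Finset (Fin n)) : ℝ :=
  (∑ i ∈ γ, shEnt p (X i)) - subEnt p X γ

/-- Binding entropy `B(X^γ)`: joint entropy minus the sum of the residual
entropies `R_j = H(X_j ∣ X^γ_{-j})` (each conditional entropy being a
difference of joint entropies). -/
def bindEnt (p : Ω → ℝ) (X : ∀ i, Ω → S i) (γ : Finset (Fin n)) : ℝ :=
  subEnt p X γ - ∑ i ∈ γ, (subEnt p X γ - subEnt p X (γ.erase i))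

/-- The O-information `Ω(X^γ) = C(X^γ) - B(X^γ)`. -/
def oInfo (p : Ω → ℝ) (X : ∀ i, Ω → S i) (γ : Finset (Fin n)) : ℝ :=
  totCorr p X γ - bindEnt p X γ

/-- `π` is a partition of `{1,…,n}`: nonempty pairwise disjoint cells covering everything. -/
def IsPartition {n : ℕ} (π : Finset (Finset (Fin n))) : Prop :=
  (∀ α ∈ π, α.Nonempty) ∧ (π : Set (Finset (Fin n))).PairwiseDisjoint id ∧
    π.sup id = Finset.univ

/-- `πb` is obtained from `πa` by splitting exactly one cell `α` of `πa` into
two nonempty (disjoint) cells `β` and `β'`. -/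
def ElemRefinement {n : ℕ} (πa πb : Finset (Finset (Fin n))) : Prop :=
  ∃ α β β', α ∈ πa ∧ β.Nonempty ∧ β'.Nonempty ∧ Disjoint β β' ∧ β ∪ β' = α ∧
    πb = insert β (insert β' (πa.erase α))

/-- Partition entropy `H(π) = Σ_{α ∈ π} H(X^α)`. -/
def partEnt (p : Ω → ℝ) (X : ∀ i, Ω → S i) (π : Finset (Finset (Fin n))) : ℝ :=
  ∑ α ∈ π, subEnt p X α

/-- Partition residual entropy `R(π) = Σ_{α ∈ π} H(X^α ∣ X^{other cells})`,
each conditional entropy written as a difference of joint entropies. -/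
def partRes (p : Ω → ℝ) (X : ∀ i, Ω → S i) (π : Finset (Finset (Fin n))) : ℝ :=
  ∑ α ∈ π, (subEnt p X (α ∪ (π.erase α).sup id) - subEnt p X ((π.erase α).sup id))


/-! ### Auxiliary lemmas -/

section Aux

lemma sum_probOf_fiber {T : Type*} [Fintype T] [DecidableEq T] (p : Ω → ℝ) (X : Ω → T) :
    ∑ s : T, probOf p (univ.filter fun ω => X ω = s) = ∑ ω, p ω := by
  simp only [probOf]
  exact Finset.sum_fiberwise _ _ _

lemma mul_logb_mul (x y : ℝ) :
    x * y * Real.logb 2 (x * y) = x * y * Real.logb 2 x + x * y * Real.logb 2 y := by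
  rcases eq_or_ne x 0 with h | h
  · simp [h]
  rcases eq_or_ne y 0 with h' | h'
  · simp [h']
  rw [Real.logb_mul h h']; ring

lemma shEnt_pair_indep {A B : Type*} [Fintype A] [DecidableEq A] [Fintype B] [DecidableEq B]
    (p : Ω → ℝ) (hp1 : ∑ ω, p ω = 1) (Y : Ω → A) (Z : Ω → B)
    (h : ∀ a b, probOf p (univ.filter fun ω => Y ω = a ∧ Z ω = b)
        = probOf p (univ.filter fun ω => Y ω = a) * probOf p (univ.filter fun ω => Z ω = b)) :
    shEnt p (fun ω => (Y ω, Z ω)) = shEnt p Y + shEnt p Z := by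
  have hY : ∑ a : A, probOf p (univ.filter fun ω => Y ω = a) = 1 := by
    rw [sum_probOf_fiber, hp1]
  have hZ : ∑ b : B, probOf p (univ.filter fun ω => Z ω = b) = 1 := by
    rw [sum_probOf_fiber, hp1]
  set qY : A → ℝ := fun a => probOf p (univ.filter fun ω => Y ω = a) with hqY
  set qZ : B → ℝ := fun b => probOf p (univ.filter fun ω => Z ω = b) with hqZ
  have key : ∀ a b, probOf p (univ.filter fun ω => (Y ω, Z ω) = (a, b)) = qY a * qZ b := by
    intro a b
    rw [← h a b]
    congr 1
    apply Finset.filter_congr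
    intro ω _
    simp [Prod.ext_iff]
  unfold shEnt
  rw [Fintype.sum_prod_type]
  have e0 : ∀ a, ∑ b, probOf p (univ.filter fun ω => (Y ω, Z ω) = (a, b)) *
      Real.logb 2 (probOf p (univ.filter fun ω => (Y ω, Z ω) = (a, b)))
      = ∑ b, (qY a * qZ b * Real.logb 2 (qY a) + qY a * qZ b * Real.logb 2 (qZ b)) := by
    intro a
    refine Finset.sum_congr rfl fun b _ => ?_
    rw [key a b]
    exact mul_logb_mul _ _
  have e1 : ∀ a, ∑ b, qY a * qZ b * Real.logb 2 (qY a) = qY a * Real.logb 2 (qY a) := by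
    intro a
    have : ∑ b, qY a * qZ b * Real.logb 2 (qY a)
        = (∑ b, qZ b) * (qY a * Real.logb 2 (qY a)) := by
      rw [Finset.sum_mul]
      exact Finset.sum_congr rfl fun b _ => by ring
    rw [this, hZ, one_mul]
  have e2 : ∀ a, ∑ b, qY a * qZ b * Real.logb 2 (qZ b)
      = qY a * ∑ b, qZ b * Real.logb 2 (qZ b) := by
    intro a
    rw [Finset.mul_sum]
    exact Finset.sum_congr rfl fun b _ => by ring
  calc -∑ a, ∑ b, probOf p (univ.filter fun ω => (Y ω, Z ω) = (a, b)) *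
        Real.logb 2 (probOf p (univ.filter fun ω => (Y ω, Z ω) = (a, b)))
      = -∑ a, (qY a * Real.logb 2 (qY a) + qY a * ∑ b, qZ b * Real.logb 2 (qZ b)) := by
        congr 1
        refine Finset.sum_congr rfl fun a _ => ?_
        rw [e0 a, Finset.sum_add_distrib, e1 a, e2 a]
    _ = -(∑ a, qY a * Real.logb 2 (qY a)) + -(∑ b, qZ b * Real.logb 2 (qZ b)) := by
        rw [Finset.sum_add_distrib, ← Finset.sum_mul, hY, one_mul, neg_add]
    _ = _ := rfl

lemma shEnt_comp_inj {A B : Type*} [Fintype A] [DecidableEq A] [Fintype B] [DecidableEq B]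
    (p : Ω → ℝ) (X : Ω → A) (f : A → B) (hf : Function.Injective f) :
    shEnt p (fun ω => f (X ω)) = shEnt p X := by
  simp only [shEnt]
  congr 1
  have hzero : ∀ b ∈ (univ : Finset B), b ∉ univ.image f →
      probOf p (univ.filter fun ω => f (X ω) = b) *
        Real.logb 2 (probOf p (univ.filter fun ω => f (X ω) = b)) = 0 := by
    intro b _ hb
    have : (univ.filter fun ω => f (X ω) = b) = ∅ := by
      apply Finset.filter_eq_empty_iff.2
      intro ω _ hc
      exact hb (Finset.mem_image.2 ⟨X ω, Finset.mem_univ _, hc⟩)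
    rw [this]
    simp [probOf]
  rw [← Finset.sum_subset (Finset.subset_univ (univ.image f)) hzero,
    Finset.sum_image (fun a _ a' _ h => hf h)]
  refine Finset.sum_congr rfl fun a _ => ?_
  have : (univ.filter fun ω => f (X ω) = f a) = univ.filter fun ω => X ω = a := by
    apply Finset.filter_congr
    intro ω _
    exact ⟨fun h => hf h, fun h => by rw [h]⟩
  rw [this]

variable {n : ℕ} {S : Fin n → Type*} [∀ i, Fintype (S i)] [∀ i, DecidableEq (S i)]

/-- The probability that `X^γ` takes the values prescribed by `v`. -/
def PP (p : Ω → ℝ) (X : ∀ i, Ω → S i) (γ : Finset (Fin n)) (v : ∀ i, S i) : ℝ :=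
  probOf p (univ.filter fun ω => ∀ i ∈ γ, X i ω = v i)

lemma PP_congr (p : Ω → ℝ) (X : ∀ i, Ω → S i) (γ : Finset (Fin n)) {v w : ∀ i, S i}
    (hvw : ∀ i ∈ γ, v i = w i) : PP p X γ v = PP p X γ w := by
  unfold PP
  congr 1
  apply Finset.filter_congr
  intro ω _
  exact ⟨fun h i hi => (hvw i hi) ▸ h i hi, fun h i hi => (hvw i hi).symm ▸ h i hi⟩

lemma PP_empty (p : Ω → ℝ) (hp1 : ∑ ω, p ω = 1) (X : ∀ i, Ω → S i) (v : ∀ i, S i) :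
    PP p X ∅ v = 1 := by
  unfold PP
  have : (univ.filter fun ω => ∀ i ∈ (∅ : Finset (Fin n)), X i ω = v i) = univ := by
    simp
  rw [this]
  simpa [probOf] using hp1

lemma PP_erase (p : Ω → ℝ) (X : ∀ i, Ω → S i) {γ : Finset (Fin n)} {j : Fin n}
    (hj : j ∈ γ) (v : ∀ i, S i) :
    PP p X (γ.erase j) v = ∑ s : S j, PP p X γ (Function.update v j s) := by
  unfold PP probOf
  rw [← Finset.sum_fiberwise (univ.filter fun ω => ∀ i ∈ γ.erase j, X i ω = v i)
      (fun ω => X j ω) p]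
  refine Finset.sum_congr rfl fun s _ => ?_
  congr 1
  rw [Finset.filter_filter]
  apply Finset.filter_congr
  intro ω _
  constructor
  · intro h i hi
    rcases eq_or_ne i j with rfl | hne
    · rw [Function.update_self]; exact h.2
    · rw [Function.update_of_ne hne]
      exact h.1 i (Finset.mem_erase.2 ⟨hne, hi⟩)
  · intro h
    constructor
    · intro i hi
      have hne := (Finset.mem_erase.1 hi).1
      have := h i (Finset.mem_erase.1 hi).2
      rwa [Function.update_of_ne hne] at this
    · have := h j hj
      rwa [Function.update_self] at this

lemma erase_inter' (j : Fin n) (γ β : Finset (Fin n)) :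
    (γ ∩ β).erase j = γ.erase j ∩ β := by
  ext x
  simp only [Finset.mem_erase, Finset.mem_inter]
  tauto

lemma fact_all (p : Ω → ℝ) (hp1 : ∑ ω, p ω = 1) (X : ∀ i, Ω → S i)
    {π : Finset (Finset (Fin n))} (hπ : IsPartition π)
    (hindep : ∀ v : ∀ i, S i,
      probOf p (Finset.univ.filter fun ω => ∀ i, X i ω = v i)
        = ∏ α ∈ π, probOf p (Finset.univ.filter fun ω => ∀ i ∈ α, X i ω = v i)) :
    ∀ δ : Finset (Fin n), ∀ v, PP p X δ v = ∏ α ∈ π, PP p X (δ ∩ α) v := by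
  obtain ⟨-, hdisj, hcover⟩ := hπ
  have hcell : ∀ j : Fin n, ∃ β ∈ π, j ∈ β := by
    intro j
    have : j ∈ π.sup id := by rw [hcover]; exact Finset.mem_univ j
    simpa using Finset.mem_sup.1 this
  have base : ∀ v, PP p X Finset.univ v = ∏ α ∈ π, PP p X (Finset.univ ∩ α) v := by
    intro v
    unfold PP
    have e : (univ.filter fun ω => ∀ i ∈ (Finset.univ : Finset (Fin n)), X i ω = v i)
        = univ.filter fun ω => ∀ i, X i ω = v i := by
      apply Finset.filter_congr
      intro ω _
      simp
    rw [e, hindep v]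
    exact Finset.prod_congr rfl fun α _ => by rw [Finset.univ_inter]
  have main : ∀ τ : Finset (Fin n), ∀ v,
      PP p X (Finset.univ \ τ) v = ∏ α ∈ π, PP p X ((Finset.univ \ τ) ∩ α) v := by
    intro τ
    induction τ using Finset.induction_on with
    | empty => simpa using base
    | @insert j τ hj ih =>
      intro v
      rw [Finset.sdiff_insert]
      set γ := Finset.univ \ τ with hγ
      by_cases hjγ : j ∈ γ
      · obtain ⟨β, hβπ, hjβ⟩ := hcell j
        have hjother : ∀ α ∈ π, α ≠ β → j ∉ α := by
          intro α hα hne hjα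
          exact (Finset.disjoint_left.1 (hdisj hα hβπ hne)) hjα hjβ
        have hup : ∀ (s : S j), ∀ α ∈ π.erase β,
            PP p X (γ ∩ α) (Function.update v j s) = PP p X (γ ∩ α) v := by
          intro s α hα
          apply PP_congr
          intro i hi
          have hne : i ≠ j := by
            rintro rfl
            exact hjother α (Finset.mem_of_mem_erase hα) (Finset.ne_of_mem_erase hα)
              (Finset.mem_inter.1 hi).2
          exact Function.update_of_ne hne s v
        calc PP p X (γ.erase j) v
            = ∑ s : S j, PP p X γ (Function.update v j s) := PP_erase p X hjγ v
          _ = ∑ s : S j, (PP p X (γ ∩ β) (Function.update v j s) *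
              ∏ α ∈ π.erase β, PP p X (γ ∩ α) v) := by
              refine Finset.sum_congr rfl fun s _ => ?_
              rw [ih (Function.update v j s),
                ← Finset.mul_prod_erase π _ hβπ]
              congr 1
              exact Finset.prod_congr rfl (hup s)
          _ = (∑ s : S j, PP p X (γ ∩ β) (Function.update v j s)) *
              ∏ α ∈ π.erase β, PP p X (γ ∩ α) v := by rw [Finset.sum_mul]
          _ = PP p X ((γ ∩ β).erase j) v * ∏ α ∈ π.erase β, PP p X (γ ∩ α) v := by
              rw [← PP_erase p X (Finset.mem_inter.2 ⟨hjγ, hjβ⟩) v]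
          _ = PP p X ((γ.erase j) ∩ β) v * ∏ α ∈ π.erase β, PP p X ((γ.erase j) ∩ α) v := by
              rw [erase_inter']
              congr 1
              refine Finset.prod_congr rfl fun α hα => ?_
              congr 1
              ext x
              simp only [Finset.mem_inter, Finset.mem_erase]
              constructor
              · rintro ⟨h1, h2⟩
                refine ⟨⟨?_, h1⟩, h2⟩
                rintro rfl
                exact hjother α (Finset.mem_of_mem_erase hα) (Finset.ne_of_mem_erase hα) h2
              · rintro ⟨⟨-, h1⟩, h2⟩
                exact ⟨h1, h2⟩
          _ = ∏ α ∈ π, PP p X ((γ.erase j) ∩ α) v :=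
              Finset.mul_prod_erase π (fun α => PP p X ((γ.erase j) ∩ α) v) hβπ
      · rw [Finset.erase_eq_of_notMem hjγ]
        exact ih v
  intro δ v
  have e : Finset.univ \ (Finset.univ \ δ) = δ := by
    rw [Finset.sdiff_sdiff_self_left, Finset.univ_inter]
  have := main (Finset.univ \ δ) v
  rwa [e] at this

lemma fact_sub (p : Ω → ℝ) (hp1 : ∑ ω, p ω = 1) (X : ∀ i, Ω → S i)
    {π : Finset (Finset (Fin n))} (hπ : IsPartition π)
    (hindep : ∀ v : ∀ i, S i,
      probOf p (Finset.univ.filter fun ω => ∀ i, X i ω = v i)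
        = ∏ α ∈ π, probOf p (Finset.univ.filter fun ω => ∀ i ∈ α, X i ω = v i))
    {σ : Finset (Finset (Fin n))} (hσ : σ ⊆ π) (δ : Finset (Fin n)) (v : ∀ i, S i) :
    PP p X (δ ∩ σ.sup id) v = ∏ α ∈ σ, PP p X (δ ∩ α) v := by
  have hdisj := hπ.2.1
  rw [fact_all p hp1 X hπ hindep (δ ∩ σ.sup id) v]
  rw [← Finset.prod_subset hσ (fun α hα hασ => ?_)]
  · refine Finset.prod_congr rfl fun α hα => ?_
    have h1 : σ.sup id ∩ α = α :=
      Finset.inter_eq_right.2 (Finset.le_sup (f := id) hα)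
    rw [Finset.inter_assoc, h1]
  · have h0 : Disjoint (σ.sup id) α := by
      rw [Finset.disjoint_sup_left]
      intro β hβ
      exact hdisj (hσ hβ) hα (fun h => hασ (h ▸ hβ))
    have h1 : σ.sup id ∩ α = ∅ := Finset.disjoint_iff_inter_eq_empty.1 h0
    rw [Finset.inter_assoc, h1, Finset.inter_empty]
    exact PP_empty p hp1 X v

lemma subEnt_empty (p : Ω → ℝ) (hp1 : ∑ ω, p ω = 1) (X : ∀ i, Ω → S i) :
    subEnt p X (∅ : Finset (Fin n)) = 0 := by
  unfold subEnt shEnt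
  haveI : IsEmpty {x : Fin n // x ∈ (∅ : Finset (Fin n))} :=
    ⟨fun x => Finset.notMem_empty x.1 x.2⟩
  rw [Fintype.sum_unique]
  have : (univ.filter fun ω => restrict X ∅ ω = default) = univ :=
    Finset.filter_true_of_mem fun ω _ => Subsingleton.elim _ _
  rw [this]
  have h1 : probOf p univ = 1 := by simpa [probOf] using hp1
  rw [h1]
  simp

lemma subEnt_union (p : Ω → ℝ) (hp1 : ∑ ω, p ω = 1) (X : ∀ i, Ω → S i)
    {γ δ : Finset (Fin n)} (hd : Disjoint γ δ)
    (h : ∀ v, PP p X (γ ∪ δ) v = PP p X γ v * PP p X δ v) :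
    subEnt p X (γ ∪ δ) = subEnt p X γ + subEnt p X δ := by
  have hΩ : Nonempty Ω := by
    by_contra hc
    rw [not_nonempty_iff] at hc
    rw [Finset.univ_eq_empty, Finset.sum_empty] at hp1
    exact one_ne_zero hp1.symm
  obtain ⟨ω₀⟩ := hΩ
  set ext : (∀ i : γ, S i.1) → (∀ i : δ, S i.1) → ∀ i, S i := fun a b i =>
    if hg : i ∈ γ then a ⟨i, hg⟩ else if hd' : i ∈ δ then b ⟨i, hd'⟩ else X i ω₀ with hext
  set f : (∀ i : (γ ∪ δ : Finset (Fin n)), S i.1) →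
      (∀ i : γ, S i.1) × (∀ i : δ, S i.1) := fun u =>
    (fun i => u ⟨i.1, Finset.mem_union_left δ i.2⟩,
      fun i => u ⟨i.1, Finset.mem_union_right γ i.2⟩) with hf
  have hfinj : Function.Injective f := by
    intro u v huv
    funext i
    rcases Finset.mem_union.1 i.2 with h' | h'
    · exact congrFun (congrArg Prod.fst huv) ⟨i.1, h'⟩
    · exact congrFun (congrArg Prod.snd huv) ⟨i.1, h'⟩
  have hcomp : shEnt p (fun ω => f (restrict X (γ ∪ δ) ω)) = shEnt p (restrict X (γ ∪ δ)) :=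
    shEnt_comp_inj p _ f hfinj
  have hpair : (fun ω => f (restrict X (γ ∪ δ) ω))
      = fun ω => (restrict X γ ω, restrict X δ ω) := rfl
  unfold subEnt
  rw [← hcomp, hpair]
  apply shEnt_pair_indep p hp1
  intro a b
  have hEa : (univ.filter fun ω => restrict X γ ω = a)
      = univ.filter fun ω => ∀ i ∈ γ, X i ω = ext a b i := by
    apply Finset.filter_congr
    intro ω _
    rw [funext_iff]
    constructor
    · intro hh i hi
      rw [hext]
      simp only [dif_pos hi]
      exact hh ⟨i, hi⟩
    · intro hh i
      have := hh i.1 i.2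
      rw [hext] at this
      simp only [dif_pos i.2] at this; exact this
  have hEb : (univ.filter fun ω => restrict X δ ω = b)
      = univ.filter fun ω => ∀ i ∈ δ, X i ω = ext a b i := by
    apply Finset.filter_congr
    intro ω _
    rw [funext_iff]
    constructor
    · intro hh i hi
      have hig : i ∉ γ := Finset.disjoint_right.1 hd hi
      rw [hext]
      simp only [dif_neg hig, dif_pos hi]
      exact hh ⟨i, hi⟩
    · intro hh i
      have := hh i.1 i.2
      have hig : i.1 ∉ γ := Finset.disjoint_right.1 hd i.2
      rw [hext] at this
      simp only [dif_neg hig, dif_pos i.2] at this; exact this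
  have hEab : (univ.filter fun ω => restrict X γ ω = a ∧ restrict X δ ω = b)
      = univ.filter fun ω => ∀ i ∈ γ ∪ δ, X i ω = ext a b i := by
    apply Finset.filter_congr
    intro ω _
    rw [funext_iff, funext_iff]
    constructor
    · rintro ⟨h1, h2⟩ i hi
      rcases Finset.mem_union.1 hi with h' | h'
      · rw [hext]; simp only [dif_pos h']; exact h1 ⟨i, h'⟩
      · have hig : i ∉ γ := Finset.disjoint_right.1 hd h'
        rw [hext]; simp only [dif_neg hig, dif_pos h']; exact h2 ⟨i, h'⟩
    · intro hh
      constructor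
      · intro i
        have := hh i.1 (Finset.mem_union_left δ i.2)
        rw [hext] at this
        simp only [dif_pos i.2] at this; exact this
      · intro i
        have hig : i.1 ∉ γ := Finset.disjoint_right.1 hd i.2
        have := hh i.1 (Finset.mem_union_right γ i.2)
        rw [hext] at this
        simp only [dif_neg hig, dif_pos i.2] at this; exact this
  show probOf p (univ.filter fun ω => restrict X γ ω = a ∧ restrict X δ ω = b) = _
  rw [hEa, hEb, hEab]
  exact h (ext a b)

lemma subEnt_partition (p : Ω → ℝ) (hp1 : ∑ ω, p ω = 1) (X : ∀ i, Ω → S i)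
    {π : Finset (Finset (Fin n))} (hπ : IsPartition π)
    (hindep : ∀ v : ∀ i, S i,
      probOf p (Finset.univ.filter fun ω => ∀ i, X i ω = v i)
        = ∏ α ∈ π, probOf p (Finset.univ.filter fun ω => ∀ i ∈ α, X i ω = v i))
    (γ : Finset (Fin n)) :
    subEnt p X γ = ∑ α ∈ π, subEnt p X (γ ∩ α) := by
  have hdisj := hπ.2.1
  have main : ∀ σ : Finset (Finset (Fin n)), σ ⊆ π →
      subEnt p X (γ ∩ σ.sup id) = ∑ α ∈ σ, subEnt p X (γ ∩ α) := by
    intro σ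
    induction σ using Finset.induction_on with
    | empty =>
      intro _
      simpa using subEnt_empty p hp1 X
    | @insert β σ' hβ ih =>
      intro hsub
      have hβπ : β ∈ π := hsub (Finset.mem_insert_self _ _)
      have hσπ : σ' ⊆ π := fun x hx => hsub (Finset.mem_insert_of_mem hx)
      have hbd : Disjoint β (σ'.sup id) := by
        rw [Finset.disjoint_sup_right]
        intro α hα
        exact hdisj hβπ (hσπ hα) (fun h => hβ (h ▸ hα))
      have hdisj2 : Disjoint (γ ∩ β) (γ ∩ σ'.sup id) :=
        hbd.mono Finset.inter_subset_right Finset.inter_subset_right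
      have heq : γ ∩ (insert β σ').sup id = (γ ∩ β) ∪ (γ ∩ σ'.sup id) := by
        rw [Finset.sup_insert, id]
        exact Finset.inter_union_distrib_left γ β (σ'.sup id)
      have hfac : ∀ v, PP p X ((γ ∩ β) ∪ (γ ∩ σ'.sup id)) v
          = PP p X (γ ∩ β) v * PP p X (γ ∩ σ'.sup id) v := by
        intro v
        rw [← heq, fact_sub p hp1 X hπ hindep hsub γ v,
          Finset.prod_insert hβ, fact_sub p hp1 X hπ hindep hσπ γ v]
      rw [heq, subEnt_union p hp1 X hdisj2 hfac, ih hσπ, Finset.sum_insert hβ]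
  have := main π Finset.Subset.rfl
  rwa [hπ.2.2, Finset.inter_univ] at this

end Aux

/-- if the joint distribution of `X^n` factorizes over a
partition `π = (α_1|…|α_m)` of `{1,…,n}`, i.e. the random vectors
`X^{α_1},…,X^{α_m}` are mutually independent, then
`Ω(X^n) = Σ_{k=1}^m Ω(X^{α_k})`. -/
theorem oInfo_additive_over_independent_partition
    (p : Ω → ℝ) (hp : ∀ ω, 0 ≤ p ω) (hp1 : ∑ ω, p ω = 1)
    (X : ∀ i, Ω → S i)
    (π : Finset (Finset (Fin n))) (hπ : IsPartition π)
    (hindep : ∀ v : ∀ i, S i,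
      probOf p (Finset.univ.filter fun ω => ∀ i, X i ω = v i)
        = ∏ α ∈ π, probOf p (Finset.univ.filter fun ω => ∀ i ∈ α, X i ω = v i)) :
    oInfo p X Finset.univ = ∑ α ∈ π, oInfo p X α := by
  have key := subEnt_partition p hp1 X hπ hindep
  have h1 : subEnt p X Finset.univ = ∑ α ∈ π, subEnt p X α := by
    rw [key Finset.univ]
    exact Finset.sum_congr rfl fun α _ => by rw [Finset.univ_inter]
  have hEI : ∀ (i : Fin n) (α : Finset (Fin n)), Finset.univ.erase i ∩ α = α.erase i := by
    intro i α
    ext x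
    simp only [Finset.mem_inter, Finset.mem_erase, Finset.mem_univ, true_and]
    tauto
  have h2 : ∀ i : Fin n, subEnt p X (Finset.univ.erase i) = ∑ α ∈ π, subEnt p X (α.erase i) := by
    intro i
    rw [key (Finset.univ.erase i)]
    exact Finset.sum_congr rfl fun α _ => by rw [hEI]
  have hsum : ∀ f : Fin n → ℝ, ∑ i, f i = ∑ α ∈ π, ∑ i ∈ α, f i := by
    intro f
    conv_lhs => rw [← hπ.2.2, Finset.sup_eq_biUnion]
    exact Finset.sum_biUnion hπ.2.1
  have h3 : ∑ i : Fin n, (subEnt p X Finset.univ - subEnt p X (Finset.univ.erase i))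
      = ∑ α ∈ π, ∑ i ∈ α, (subEnt p X α - subEnt p X (α.erase i)) := by
    have step1 : ∀ i : Fin n, subEnt p X Finset.univ - subEnt p X (Finset.univ.erase i)
        = ∑ α ∈ π, (subEnt p X α - subEnt p X (α.erase i)) := by
      intro i
      rw [h1, h2 i, ← Finset.sum_sub_distrib]
    calc ∑ i : Fin n, (subEnt p X Finset.univ - subEnt p X (Finset.univ.erase i))
        = ∑ i : Fin n, ∑ α ∈ π, (subEnt p X α - subEnt p X (α.erase i)) :=
          Finset.sum_congr rfl fun i _ => step1 i
      _ = ∑ α ∈ π, ∑ i : Fin n, (subEnt p X α - subEnt p X (α.erase i)) := Finset.sum_comm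
      _ = ∑ α ∈ π, ∑ i ∈ α, (subEnt p X α - subEnt p X (α.erase i)) := by
          refine Finset.sum_congr rfl fun α _ => ?_
          refine (Finset.sum_subset (Finset.subset_univ α) fun i _ hi => ?_).symm
          rw [Finset.erase_eq_of_notMem hi, sub_self]
  have expand : ∀ γ : Finset (Fin n), oInfo p X γ
      = (∑ i ∈ γ, shEnt p (X i)) - 2 * subEnt p X γ
        + ∑ i ∈ γ, (subEnt p X γ - subEnt p X (γ.erase i)) := by
    intro γ
    unfold oInfo totCorr bindEnt
    ring
  rw [expand Finset.univ]
  have hrhs : ∑ α ∈ π, oInfo p X α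
      = (∑ α ∈ π, ∑ i ∈ α, shEnt p (X i)) - 2 * ∑ α ∈ π, subEnt p X α
        + ∑ α ∈ π, ∑ i ∈ α, (subEnt p X α - subEnt p X (α.erase i)) := by
    rw [Finset.mul_sum, ← Finset.sum_sub_distrib, ← Finset.sum_add_distrib]
    exact Finset.sum_congr rfl fun α _ => (expand α).trans (by ring)
  rw [hrhs, ← hsum (fun i => shEnt p (X i)), ← h1, ← h3]
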